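/- For the 3+3 product model on ℝ⁶ with both sectional curvatures μ and λ, the pointwise invariants take the values Q = −(24/25)(μ+λ)³, L₁ = 0, L₂ = −(36/25)(μ+λ)³, and L₃ = (18/25)(μ+λ)³, where Q := −(40/9)J³ + 16J|E|² − 16 tr E³ − 8 W_{ijkl}E^{ik}E^{jl}, L₁ := 96⟨E, tr W²⟩, L₂ := 16⟨E, tr W²⟩ − (4/3) J tr² W², L₃ := 4 tr² W³. -/
import Mathlib


open Finset

/-- Kulkarni–Nomizu product of two 2-tensors: (S∧T)_{ijkl}. -/
def KN {n : ℕ} (S T : Fin n → Fin n → ℝ) : Fin n → Fin n → Fin n → Fin n → ℝ :=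
  fun i j k l => S i k * T j l + S j l * T i k - S i l * T j k - S j k * T i l

/-- Composition of 2-tensors (as endomorphisms, indices raised by the standard metric). -/
noncomputable def comp2 {n : ℕ} (S T : Fin n → Fin n → ℝ) : Fin n → Fin n → ℝ :=
  fun i j => ∑ u, S i u * T u j

/-- Composition of curvature-type 4-tensors: (A∘B)_{ijkl} = (1/2) A_{ij}^{uv} B_{uvkl}. -/
noncomputable def comp4 {n : ℕ} (A B : Fin n → Fin n → Fin n → Fin n → ℝ) :
    Fin n → Fin n → Fin n → Fin n → ℝ :=
  fun i j k l => (1 / 2 : ℝ) * ∑ u, ∑ v, A i j u v * B u v k l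

/-- Partial (Ricci-type) trace of a 4-tensor: (tr A)_{ij} = A_{iuj}^{u}. -/
noncomputable def ptr {n : ℕ} (A : Fin n → Fin n → Fin n → Fin n → ℝ) :
    Fin n → Fin n → ℝ :=
  fun i j => ∑ u, A i u j u

/-- Full trace of a 2-tensor. -/
noncomputable def tr2 {n : ℕ} (S : Fin n → Fin n → ℝ) : ℝ := ∑ i, S i i

/-- Inner product of 2-tensors (standard metric). -/
noncomputable def inner2 {n : ℕ} (S T : Fin n → Fin n → ℝ) : ℝ := ∑ i, ∑ j, S i j * T i j

/-- The first-factor metric on ℝ^m ⊕ ℝ^{6-m} ≅ ℝ⁶, extended by zero. -/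
def g6 (m : ℕ) : Fin 6 → Fin 6 → ℝ := fun i j => if i = j ∧ (i : ℕ) < m then 1 else 0

/-- The second-factor metric on ℝ^m ⊕ ℝ^{6-m} ≅ ℝ⁶, extended by zero. -/
def h6 (m : ℕ) : Fin 6 → Fin 6 → ℝ := fun i j => if i = j ∧ m ≤ (i : ℕ) then 1 else 0

/-- The standard inner product ḡ on ℝ⁶. -/
def gb6 : Fin 6 → Fin 6 → ℝ := fun i j => if i = j then 1 else 0

/-- Curvature model of a product of spaceforms of dimensions m and 6−m with
sectional curvatures μ and ν: R = (μ/2) g∧g + (ν/2) h∧h. -/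
noncomputable def Rm (m : ℕ) (μ ν : ℝ) : Fin 6 → Fin 6 → Fin 6 → Fin 6 → ℝ :=
  fun i j k l => (μ / 2) * KN (g6 m) (g6 m) i j k l + (ν / 2) * KN (h6 m) (h6 m) i j k l

/-- J = tr_ḡ(Ric)/10 in dimension six. -/
noncomputable def Jm (m : ℕ) (μ ν : ℝ) : ℝ := tr2 (ptr (Rm m μ ν)) / 10

/-- Schouten tensor P = (Ric − Jḡ)/4 in dimension six. -/
noncomputable def Pm (m : ℕ) (μ ν : ℝ) : Fin 6 → Fin 6 → ℝ :=
  fun i j => (ptr (Rm m μ ν) i j - Jm m μ ν * gb6 i j) / 4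

/-- Trace-free Schouten tensor E = P − (J/6)ḡ. -/
noncomputable def Em (m : ℕ) (μ ν : ℝ) : Fin 6 → Fin 6 → ℝ :=
  fun i j => Pm m μ ν i j - (Jm m μ ν / 6) * gb6 i j

/-- Weyl tensor W = R − P∧ḡ. -/
noncomputable def Wm (m : ℕ) (μ ν : ℝ) : Fin 6 → Fin 6 → Fin 6 → Fin 6 → ℝ :=
  fun i j k l => Rm m μ ν i j k l - KN (Pm m μ ν) gb6 i j k l

/-- W² = W∘W. -/
noncomputable def W2m (m : ℕ) (μ ν : ℝ) := comp4 (Wm m μ ν) (Wm m μ ν)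

/-- W³ = W∘W∘W. -/
noncomputable def W3m (m : ℕ) (μ ν : ℝ) := comp4 (Wm m μ ν) (W2m m μ ν)

/-- Q = −(40/9)J³ + 16J|E|² − 16 tr E³ − 8 W_{ijkl}E^{ik}E^{jl}. -/
noncomputable def Qm (m : ℕ) (μ ν : ℝ) : ℝ :=
  -(40 / 9) * (Jm m μ ν) ^ 3 + 16 * Jm m μ ν * inner2 (Em m μ ν) (Em m μ ν)
    - 16 * tr2 (comp2 (Em m μ ν) (comp2 (Em m μ ν) (Em m μ ν)))
    - 8 * ∑ i, ∑ j, ∑ k, ∑ l, Wm m μ ν i j k l * Em m μ ν i k * Em m μ ν j l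

/-- L₁ = 96⟨E, tr W²⟩. -/
noncomputable def L1m (m : ℕ) (μ ν : ℝ) : ℝ := 96 * inner2 (Em m μ ν) (ptr (W2m m μ ν))

/-- L₂ = 16⟨E, tr W²⟩ − (4/3) J tr² W². -/
noncomputable def L2m (m : ℕ) (μ ν : ℝ) : ℝ :=
  16 * inner2 (Em m μ ν) (ptr (W2m m μ ν)) - (4 / 3) * Jm m μ ν * tr2 (ptr (W2m m μ ν))

/-- L₃ = 4 tr² W³. -/
noncomputable def L3m (m : ℕ) (μ ν : ℝ) : ℝ := 4 * tr2 (ptr (W3m m μ ν))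

/-! ### Auxiliary integer-valued model tensors -/

def gz : Fin 6 → Fin 6 → ℤ := fun i j => if i = j ∧ (i : ℕ) < 3 then 1 else 0
def hz : Fin 6 → Fin 6 → ℤ := fun i j => if i = j ∧ 3 ≤ (i : ℕ) then 1 else 0
def Sz : Fin 6 → Fin 6 → ℤ := fun i j => gz i j - hz i j
def KNz (S T : Fin 6 → Fin 6 → ℤ) : Fin 6 → Fin 6 → Fin 6 → Fin 6 → ℤ :=
  fun i j k l => S i k * T j l + S j l * T i k - S i l * T j k - S j k * T i l
def W0z : Fin 6 → Fin 6 → Fin 6 → Fin 6 → ℤ :=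
  fun i j k l => 3 * KNz gz gz i j k l + 3 * KNz hz hz i j k l - 4 * KNz gz hz i j k l

/-! ### Real closed-form building blocks -/

noncomputable def S0 : Fin 6 → Fin 6 → ℝ := fun i j => g6 3 i j - h6 3 i j
noncomputable def W0R : Fin 6 → Fin 6 → Fin 6 → Fin 6 → ℝ :=
  fun i j k l => 3 * KN (g6 3) (g6 3) i j k l + 3 * KN (h6 3) (h6 3) i j k l
    - 4 * KN (g6 3) (h6 3) i j k l

lemma castg : ∀ i j : Fin 6, ((gz i j : ℤ) : ℝ) = g6 3 i j := by
  intro i j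
  by_cases hc : i = j ∧ (i : ℕ) < 3 <;> simp [gz, g6, hc]

lemma casth : ∀ i j : Fin 6, ((hz i j : ℤ) : ℝ) = h6 3 i j := by
  intro i j
  by_cases hc : i = j ∧ 3 ≤ (i : ℕ) <;> simp [hz, h6, hc]

lemma castS : ∀ i j : Fin 6, ((Sz i j : ℤ) : ℝ) = S0 i j := by
  intro i j
  simp only [Sz, S0]
  push_cast [castg, casth]
  ring

lemma castW0 : ∀ i j k l : Fin 6, ((W0z i j k l : ℤ) : ℝ) = W0R i j k l := by
  intro i j k l
  simp only [W0z, W0R, KNz, KN]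
  push_cast [castg, casth]
  ring

/-! ### Integer contractions, by brute force -/

set_option maxHeartbeats 1000000 in
lemma d1 : (∑ i : Fin 6, ∑ j : Fin 6, Sz i j * Sz i j) = 6 := by decide

set_option maxHeartbeats 1000000 in
lemma d2 : (∑ i : Fin 6, ∑ u : Fin 6, ∑ v : Fin 6, Sz i u * (Sz u v * Sz v i)) = 0 := by decide

set_option maxHeartbeats 4000000 in
lemma d3 : (∑ i : Fin 6, ∑ j : Fin 6, ∑ k : Fin 6, ∑ l : Fin 6,
    W0z i j k l * (Sz i k * Sz j l)) = 144 := by decide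

set_option maxHeartbeats 4000000 in
lemma d4 : (∑ i : Fin 6, ∑ u : Fin 6, ∑ a : Fin 6, ∑ b : Fin 6,
    W0z i u a b * W0z a b i u) = 1440 := by decide

set_option maxHeartbeats 8000000 in
lemma d5 : (∑ i : Fin 6, ∑ j : Fin 6, ∑ u : Fin 6, ∑ a : Fin 6, ∑ b : Fin 6,
    Sz i j * (W0z i u a b * W0z a b j u)) = 0 := by decide

set_option maxHeartbeats 16000000 in
lemma d6 : (∑ i : Fin 6, ∑ u : Fin 6, ∑ a : Fin 6, ∑ b : Fin 6, ∑ c : Fin 6, ∑ d : Fin 6,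
    W0z i u a b * (W0z a b c d * W0z c d i u)) = 5760 := by decide

/-! ### The corresponding real contractions -/

lemma r1 : (∑ i : Fin 6, ∑ j : Fin 6, S0 i j * S0 i j) = 6 := by
  have h2 : ((∑ i : Fin 6, ∑ j : Fin 6, Sz i j * Sz i j : ℤ) : ℝ)
      = ∑ i : Fin 6, ∑ j : Fin 6, S0 i j * S0 i j := by push_cast [castS]; rfl
  rw [← h2, d1]; norm_num

lemma r2 : (∑ i : Fin 6, ∑ u : Fin 6, ∑ v : Fin 6, S0 i u * (S0 u v * S0 v i)) = 0 := by
  have h2 : ((∑ i : Fin 6, ∑ u : Fin 6, ∑ v : Fin 6, Sz i u * (Sz u v * Sz v i) : ℤ) : ℝ)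
      = ∑ i : Fin 6, ∑ u : Fin 6, ∑ v : Fin 6, S0 i u * (S0 u v * S0 v i) := by
    push_cast [castS]; rfl
  rw [← h2, d2]; norm_num

lemma r3 : (∑ i : Fin 6, ∑ j : Fin 6, ∑ k : Fin 6, ∑ l : Fin 6,
    W0R i j k l * (S0 i k * S0 j l)) = 144 := by
  have h2 : ((∑ i : Fin 6, ∑ j : Fin 6, ∑ k : Fin 6, ∑ l : Fin 6,
      W0z i j k l * (Sz i k * Sz j l) : ℤ) : ℝ)
      = ∑ i : Fin 6, ∑ j : Fin 6, ∑ k : Fin 6, ∑ l : Fin 6,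
        W0R i j k l * (S0 i k * S0 j l) := by push_cast [castS, castW0]; rfl
  rw [← h2, d3]; norm_num

lemma r4 : (∑ i : Fin 6, ∑ u : Fin 6, ∑ a : Fin 6, ∑ b : Fin 6,
    W0R i u a b * W0R a b i u) = 1440 := by
  have h2 : ((∑ i : Fin 6, ∑ u : Fin 6, ∑ a : Fin 6, ∑ b : Fin 6,
      W0z i u a b * W0z a b i u : ℤ) : ℝ)
      = ∑ i : Fin 6, ∑ u : Fin 6, ∑ a : Fin 6, ∑ b : Fin 6,
        W0R i u a b * W0R a b i u := by push_cast [castW0]; rfl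
  rw [← h2, d4]; norm_num

lemma r5 : (∑ i : Fin 6, ∑ j : Fin 6, ∑ u : Fin 6, ∑ a : Fin 6, ∑ b : Fin 6,
    S0 i j * (W0R i u a b * W0R a b j u)) = 0 := by
  have h2 : ((∑ i : Fin 6, ∑ j : Fin 6, ∑ u : Fin 6, ∑ a : Fin 6, ∑ b : Fin 6,
      Sz i j * (W0z i u a b * W0z a b j u) : ℤ) : ℝ)
      = ∑ i : Fin 6, ∑ j : Fin 6, ∑ u : Fin 6, ∑ a : Fin 6, ∑ b : Fin 6,
        S0 i j * (W0R i u a b * W0R a b j u) := by push_cast [castS, castW0]; rfl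
  rw [← h2, d5]; norm_num

lemma r6 : (∑ i : Fin 6, ∑ u : Fin 6, ∑ a : Fin 6, ∑ b : Fin 6, ∑ c : Fin 6, ∑ d : Fin 6,
    W0R i u a b * (W0R a b c d * W0R c d i u)) = 5760 := by
  have h2 : ((∑ i : Fin 6, ∑ u : Fin 6, ∑ a : Fin 6, ∑ b : Fin 6, ∑ c : Fin 6, ∑ d : Fin 6,
      W0z i u a b * (W0z a b c d * W0z c d i u) : ℤ) : ℝ)
      = ∑ i : Fin 6, ∑ u : Fin 6, ∑ a : Fin 6, ∑ b : Fin 6, ∑ c : Fin 6, ∑ d : Fin 6,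
        W0R i u a b * (W0R a b c d * W0R c d i u) := by push_cast [castW0]; rfl
  rw [← h2, d6]; norm_num

/-! ### Pointwise closed forms for the curvature quantities -/

set_option maxHeartbeats 2000000 in
lemma ricL (μ ν : ℝ) : ∀ i j, ptr (Rm 3 μ ν) i j = 2*μ*g6 3 i j + 2*ν*h6 3 i j := by
  intro i j
  fin_cases i <;> fin_cases j <;>
    simp [ptr, Rm, KN, g6, h6, Fin.sum_univ_six, show ((3:Fin 6):ℕ)=3 from rfl,
      show ((4:Fin 6):ℕ)=4 from rfl, show ((5:Fin 6):ℕ)=5 from rfl] <;> ring_nf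

lemma gsplit : ∀ i j : Fin 6, gb6 i j = g6 3 i j + h6 3 i j := by
  intro i j
  fin_cases i <;> fin_cases j <;> norm_num [gb6, g6, h6, Fin.ext_iff]

lemma jval (μ ν : ℝ) : Jm 3 μ ν = 3*(μ+ν)/5 := by
  simp only [Jm, tr2, ricL, Fin.sum_univ_six]
  norm_num [g6, h6, show ((3:Fin 6):ℕ)=3 from rfl, show ((4:Fin 6):ℕ)=4 from rfl,
    show ((5:Fin 6):ℕ)=5 from rfl]
  ring

lemma pval (μ ν : ℝ) : ∀ i j, Pm 3 μ ν i j
    = (7*μ-3*ν)/20 * g6 3 i j + (7*ν-3*μ)/20 * h6 3 i j := by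
  intro i j
  simp only [Pm, ricL, jval, gsplit]
  ring

lemma eval (μ ν : ℝ) : ∀ i j, Em 3 μ ν i j = (μ-ν)/4 * S0 i j := by
  intro i j
  simp only [Em, S0, pval, jval, gsplit]
  ring

lemma wval (μ ν : ℝ) : ∀ i j k l, Wm 3 μ ν i j k l = (μ+ν)/20 * W0R i j k l := by
  intro i j k l
  simp only [Wm, Rm, KN, W0R]
  rw [pval μ ν i k, pval μ ν j l, pval μ ν i l, pval μ ν j k,
    gsplit i k, gsplit j l, gsplit i l, gsplit j k]
  ring

/-! ### Assembling the invariants -/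

lemma inner2E (μ ν : ℝ) : inner2 (Em 3 μ ν) (Em 3 μ ν) = ((μ-ν)/4)^2 * 6 := by
  have key : inner2 (Em 3 μ ν) (Em 3 μ ν)
      = ((μ-ν)/4)^2 * ∑ i : Fin 6, ∑ j : Fin 6, S0 i j * S0 i j := by
    simp only [inner2, eval, Finset.mul_sum]
    refine Finset.sum_congr rfl fun i _ => Finset.sum_congr rfl fun j _ => by ring
  rw [key, r1]

lemma trE3 (μ ν : ℝ) : tr2 (comp2 (Em 3 μ ν) (comp2 (Em 3 μ ν) (Em 3 μ ν))) = 0 := by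
  have key : tr2 (comp2 (Em 3 μ ν) (comp2 (Em 3 μ ν) (Em 3 μ ν)))
      = ((μ-ν)/4)^3 * ∑ i : Fin 6, ∑ u : Fin 6, ∑ v : Fin 6, S0 i u * (S0 u v * S0 v i) := by
    simp only [tr2, comp2, eval, Finset.mul_sum]
    refine Finset.sum_congr rfl fun i _ => Finset.sum_congr rfl fun u _ =>
      Finset.sum_congr rfl fun v _ => by ring
  rw [key, r2]
  ring

lemma wEE (μ ν : ℝ) : (∑ i : Fin 6, ∑ j : Fin 6, ∑ k : Fin 6, ∑ l : Fin 6,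
    Wm 3 μ ν i j k l * Em 3 μ ν i k * Em 3 μ ν j l)
    = (μ+ν)/20 * ((μ-ν)/4)^2 * 144 := by
  have key : (∑ i : Fin 6, ∑ j : Fin 6, ∑ k : Fin 6, ∑ l : Fin 6,
      Wm 3 μ ν i j k l * Em 3 μ ν i k * Em 3 μ ν j l)
      = (μ+ν)/20 * ((μ-ν)/4)^2 * ∑ i : Fin 6, ∑ j : Fin 6, ∑ k : Fin 6, ∑ l : Fin 6,
        W0R i j k l * (S0 i k * S0 j l) := by
    simp only [wval, eval, Finset.mul_sum]
    refine Finset.sum_congr rfl fun i _ => Finset.sum_congr rfl fun j _ =>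
      Finset.sum_congr rfl fun k _ => Finset.sum_congr rfl fun l _ => by ring
  rw [key, r3]

lemma innerEW2 (μ ν : ℝ) : inner2 (Em 3 μ ν) (ptr (W2m 3 μ ν)) = 0 := by
  have key : inner2 (Em 3 μ ν) (ptr (W2m 3 μ ν))
      = (μ-ν)/4 * ((μ+ν)/20)^2 * (1/2)
        * ∑ i : Fin 6, ∑ j : Fin 6, ∑ u : Fin 6, ∑ a : Fin 6, ∑ b : Fin 6,
          S0 i j * (W0R i u a b * W0R a b j u) := by
    simp only [inner2, ptr, W2m, comp4, eval, wval, Finset.mul_sum]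
    refine Finset.sum_congr rfl fun i _ => Finset.sum_congr rfl fun j _ =>
      Finset.sum_congr rfl fun u _ => Finset.sum_congr rfl fun a _ =>
      Finset.sum_congr rfl fun b _ => by ring
  rw [key, r5]
  ring

lemma trW2 (μ ν : ℝ) : tr2 (ptr (W2m 3 μ ν)) = ((μ+ν)/20)^2 * 720 := by
  have key : tr2 (ptr (W2m 3 μ ν))
      = ((μ+ν)/20)^2 * (1/2) * ∑ i : Fin 6, ∑ u : Fin 6, ∑ a : Fin 6, ∑ b : Fin 6,
          W0R i u a b * W0R a b i u := by
    simp only [tr2, ptr, W2m, comp4, wval, Finset.mul_sum]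
    refine Finset.sum_congr rfl fun i _ => Finset.sum_congr rfl fun u _ =>
      Finset.sum_congr rfl fun a _ => Finset.sum_congr rfl fun b _ => by ring
  rw [key, r4]
  ring

lemma trW3 (μ ν : ℝ) : tr2 (ptr (W3m 3 μ ν)) = ((μ+ν)/20)^3 * 1440 := by
  have key : tr2 (ptr (W3m 3 μ ν))
      = ((μ+ν)/20)^3 * (1/4)
        * ∑ i : Fin 6, ∑ u : Fin 6, ∑ a : Fin 6, ∑ b : Fin 6, ∑ c : Fin 6, ∑ d : Fin 6,
          W0R i u a b * (W0R a b c d * W0R c d i u) := by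
    simp only [tr2, ptr, W3m, W2m, comp4, wval, Finset.mul_sum]
    refine Finset.sum_congr rfl fun i _ => Finset.sum_congr rfl fun u _ =>
      Finset.sum_congr rfl fun a _ => Finset.sum_congr rfl fun b _ =>
      Finset.sum_congr rfl fun c _ => Finset.sum_congr rfl fun d _ => by ring
  rw [key, r6]
  ring

theorem stmt9 (μ lam : ℝ) :
    Qm 3 μ lam = -(24 / 25) * (μ + lam) ^ 3 ∧
    L1m 3 μ lam = 0 ∧
    L2m 3 μ lam = -(36 / 25) * (μ + lam) ^ 3 ∧
    L3m 3 μ lam = (18 / 25) * (μ + lam) ^ 3 := by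
  refine ⟨?_, ?_, ?_, ?_⟩
  · rw [Qm, jval, inner2E, trE3, wEE]
    ring
  · rw [L1m, innerEW2]
    ring
  · rw [L2m, innerEW2, jval, trW2]
    ring
  · rw [L3m, trW3]
    ring
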